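/- Let Σ be an alphabet and let x, y be strings over Σ, each of length n. Then Σ_{c ∈ Σ} ψ(x)_c · ψ(y)_c ≤ 2n · LCS(x, y). Equivalently, the number of matching pairs (i, j) ∈ [n] × [n] with x_i = y_j is at most 2n times the length of the longest common subsequence of x and y. -/

import Mathlib

/-- `LCS x y` is the maximal length of a common subsequence of the strings `x` and `y`. -/
noncomputable def LCS {α : Type*} (x y : List α) : ℕ :=
  sSup {k | ∃ s : List α, s.Sublist x ∧ s.Sublist y ∧ s.length = k}

lemma min_count_le_LCS {α : Type*} [DecidableEq α] (x y : List α) (c : α) :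
    min (x.count c) (y.count c) ≤ LCS x y := by
  have hx : (List.replicate (min (x.count c) (y.count c)) c).Sublist x :=
    (List.replicate_sublist_iff).mpr (min_le_left _ _)
  have hy : (List.replicate (min (x.count c) (y.count c)) c).Sublist y :=
    (List.replicate_sublist_iff).mpr (min_le_right _ _)
  have hbdd : BddAbove {k | ∃ s : List α, s.Sublist x ∧ s.Sublist y ∧ s.length = k} := by
    refine ⟨x.length, ?_⟩
    rintro k ⟨s, hsx, _, rfl⟩
    exact hsx.length_le
  exact le_csSup hbdd ⟨_, hx, hy, by simp⟩

/-- For strings `x, y` of length `n` over a finite alphabet, the number of matching pairs,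
`∑_c ψ(x)_c · ψ(y)_c`, is at most `2n · LCS(x,y)`. -/
theorem inner_counts_le_two_n_mul_LCS {α : Type*} [DecidableEq α] [Fintype α]
    (n : ℕ) (x y : List α) (hx : x.length = n) (hy : y.length = n) :
    ∑ c : α, x.count c * y.count c ≤ 2 * n * LCS x y := by
  have key : ∀ c : α, x.count c * y.count c ≤ (x.count c + y.count c) * LCS x y := by
    intro c
    calc x.count c * y.count c
        ≤ (x.count c + y.count c) * min (x.count c) (y.count c) := by
          rcases le_total (x.count c) (y.count c) with h | h
          · rw [min_eq_left h]; nlinarith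
          · rw [min_eq_right h]; nlinarith
      _ ≤ (x.count c + y.count c) * LCS x y :=
          Nat.mul_le_mul le_rfl (min_count_le_LCS x y c)
  calc ∑ c : α, x.count c * y.count c
      ≤ ∑ c : α, (x.count c + y.count c) * LCS x y := Finset.sum_le_sum fun c _ => key c
    _ = (∑ c : α, (x.count c + y.count c)) * LCS x y := by rw [Finset.sum_mul]
    _ = 2 * n * LCS x y := by
        congr 1
        rw [Finset.sum_add_distrib]
        have hxc : ∑ c : α, x.count c = n := by
          simpa [hx] using Multiset.sum_count_eq_card (s := Finset.univ) (m := (x : Multiset α)) (fun a _ => Finset.mem_univ a)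
        have hyc : ∑ c : α, y.count c = n := by
          simpa [hy] using Multiset.sum_count_eq_card (s := Finset.univ) (m := (y : Multiset α)) (fun a _ => Finset.mem_univ a)
        omega
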